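/- For all m ≥ 1 and t ≥ 0, the complete homogeneous symmetric polynomial satisfies h_t(1+y_1, ..., 1+y_m) = Σ_{k=0}^t C(m+t−1, m+k−1) h_k(y_1, ..., y_m), where C denotes binomial coefficients. -/

import Mathlib

open MvPolynomial Finset Finset.Nat

-- convolution identity for multichoose
lemma mc_conv (x y : ℕ) : ∀ N : ℕ, ∑ p ∈ antidiagonal N,
    Nat.multichoose x p.1 * Nat.multichoose y p.2 = Nat.multichoose (x + y) N := by
  induction x with
  | zero =>
    intro N
    induction N with
    | zero => simp
    | succ N _ =>
      rw [Finset.Nat.sum_antidiagonal_succ]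
      simp
  | succ x ihx =>
    intro N
    induction N with
    | zero => simp
    | succ N ihN =>
      rw [Finset.Nat.sum_antidiagonal_succ]
      have h1 : ∀ p : ℕ × ℕ, Nat.multichoose (x+1) (p.1+1) * Nat.multichoose y p.2
          = Nat.multichoose x (p.1+1) * Nat.multichoose y p.2
            + Nat.multichoose (x+1) p.1 * Nat.multichoose y p.2 := by
        intro p; rw [Nat.multichoose_succ_succ, add_mul]
      simp_rw [h1]
      rw [Finset.sum_add_distrib, ← add_assoc]
      have h2 : Nat.multichoose (x+1) 0 * Nat.multichoose y (N+1)
            + ∑ p ∈ antidiagonal N, Nat.multichoose x (p.1+1) * Nat.multichoose y p.2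
          = ∑ p ∈ antidiagonal (N+1), Nat.multichoose x p.1 * Nat.multichoose y p.2 := by
        rw [Finset.Nat.sum_antidiagonal_succ]; simp
      rw [h2, ihx, ihN, Nat.succ_add, Nat.multichoose_succ_succ]

lemma regroup {M : Type*} [AddCommMonoid M] (F : ℕ → ℕ → ℕ → ℕ → M) (n : ℕ) :
    ∑ p ∈ antidiagonal n, ∑ q ∈ antidiagonal p.1, ∑ r ∈ antidiagonal p.2, F q.1 q.2 r.1 r.2
    = ∑ p ∈ antidiagonal n, ∑ q ∈ antidiagonal p.1, ∑ r ∈ antidiagonal p.2, F q.1 r.1 q.2 r.2 := by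
  rw [Finset.sum_sigma', Finset.sum_sigma']
  rw [Finset.sum_sigma', Finset.sum_sigma']
  apply Finset.sum_nbij' (i := fun ⟨⟨_p, q⟩, r⟩ => ⟨⟨(q.1 + r.1, q.2 + r.2), (q.1, r.1)⟩, (q.2, r.2)⟩)
    (j := fun ⟨⟨_p, q⟩, r⟩ => ⟨⟨(q.1 + r.1, q.2 + r.2), (q.1, r.1)⟩, (q.2, r.2)⟩) <;>
    aesop (add simp [add_assoc, add_comm, add_left_comm])

lemma sum_fA_insert {ι M : Type*} [DecidableEq ι] [AddCommMonoid M] {a : ι} {s : Finset ι}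
    (h : a ∉ s) (n : ℕ) (F : (ι →₀ ℕ) → M) :
    ∑ f ∈ finsuppAntidiag (insert a s) n, F f
    = ∑ p ∈ antidiagonal n, ∑ g ∈ finsuppAntidiag s p.2, F (Finsupp.update g a p.1) := by
  rw [Finset.finsuppAntidiag_insert h, Finset.sum_biUnion]
  · refine Finset.sum_congr rfl fun p _ => ?_
    rw [Finset.sum_map]
    exact Finset.sum_attach _ fun g => F (Finsupp.update g a p.1)
  · intro p hp p' hp' hne
    simp only [Finset.disjoint_left]
    rintro f hf hf'
    simp only [Finset.mem_map, Finset.mem_attach, true_and, Subtype.exists] at hf hf'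
    obtain ⟨g, hg, rfl⟩ := hf
    obtain ⟨g', hg', heq⟩ := hf'
    apply hne
    have h1 : p.1 = p'.1 := by
      have := congrFun (congrArg (⇑) heq) a
      simpa [Finsupp.update] using this.symm
    have : p.1 + p.2 = p'.1 + p'.2 := by
      rw [Finset.HasAntidiagonal.mem_antidiagonal.mp hp, Finset.HasAntidiagonal.mem_antidiagonal.mp hp']
    exact Prod.ext h1 (by omega)

-- binomial expansion of (1 + X a)^p over the antidiagonal
lemma one_add_X_pow {ι : Type*} (a : ι) (p : ℕ) :
    ((1 : MvPolynomial ι ℤ) + X a) ^ p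
    = ∑ q ∈ antidiagonal p, C ((q.1 + q.2).choose q.1 : ℤ) * X a ^ q.1 := by
  rw [add_comm, add_pow]
  rw [Finset.Nat.sum_antidiagonal_eq_sum_range_succ (fun j u => C (((j + u).choose j : ℕ) : ℤ) * X a ^ j) p]
  refine Finset.sum_congr rfl fun j hj => ?_
  rw [Finset.mem_range] at hj
  have : j + (p - j) = p := by omega
  rw [this, one_pow, mul_one]
  rw [mul_comm]
  congr 1

-- update with a fresh point is adding a single
lemma update_eq_add_single {ι : Type*} [DecidableEq ι] {a : ι} {s : Finset ι} (h : a ∉ s)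
    {g : ι →₀ ℕ} (hg : g.support ⊆ s) (j : ℕ) :
    Finsupp.update g a j = Finsupp.single a j + g := by
  rw [Finsupp.update_eq_single_add_erase]
  congr 1
  apply Finsupp.erase_of_notMem_support
  exact fun hmem => h (hg hmem)

-- H (insert a s) K decomposition
lemma H_insert {ι : Type*} [DecidableEq ι] {a : ι} {s : Finset ι} (h : a ∉ s) (K : ℕ) :
    ∑ e ∈ finsuppAntidiag (insert a s) K, monomial e (1 : ℤ)
    = ∑ q ∈ antidiagonal K, X a ^ q.1 * ∑ e ∈ finsuppAntidiag s q.2, monomial e (1 : ℤ) := by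
  have hprev := sum_fA_insert h K (fun e => monomial e (1:ℤ))
  rw [hprev]
  refine Finset.sum_congr rfl fun q hq => ?_
  rw [Finset.mul_sum]
  refine Finset.sum_congr rfl fun g hg => ?_
  rw [Finset.mem_finsuppAntidiag] at hg
  rw [update_eq_add_single h hg.2 q.1, X_pow_eq_monomial, monomial_mul, mul_one]

lemma mc_choose (j u : ℕ) : Nat.multichoose (j + 1) u = (j + u).choose j := by
  rw [Nat.multichoose_eq]
  have : j + 1 + u - 1 = j + u := by omega
  rw [this, Nat.choose_symm_add]

lemma ML {ι : Type*} [DecidableEq ι] (s : Finset ι) (n : ℕ) :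
    ∑ d ∈ finsuppAntidiag s n, ∏ i ∈ s, ((1 : MvPolynomial ι ℤ) + X i) ^ d i
    = ∑ p ∈ antidiagonal n, C ((Nat.multichoose (s.card + p.1) p.2 : ℤ)) *
        ∑ e ∈ finsuppAntidiag s p.1, monomial e (1 : ℤ) := by
  induction s using Finset.induction_on generalizing n with
  | empty =>
    cases n with
    | zero => simp
    | succ n =>
      rw [Finset.finsuppAntidiag_empty_of_ne_zero (Nat.succ_ne_zero n), Finset.sum_empty]
      rw [eq_comm]
      apply Finset.sum_eq_zero
      intro p hp
      rcases Nat.eq_zero_or_pos p.1 with h1 | h1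
      · have hp2 : p.2 = n + 1 := by
          have := Finset.HasAntidiagonal.mem_antidiagonal.mp hp; omega
        rw [h1, hp2]
        simp
      · rw [Finset.finsuppAntidiag_empty_of_ne_zero (by omega), Finset.sum_empty, mul_zero]
  | insert a s h ih =>
    set c := s.card with hc
    have hcard : (insert a s).card = c + 1 := Finset.card_insert_of_notMem h
    -- transform LHS
    rw [sum_fA_insert h n (fun d => ∏ i ∈ insert a s, ((1 : MvPolynomial ι ℤ) + X i) ^ d i)]
    have step1 : ∀ p ∈ antidiagonal n, ∀ g ∈ finsuppAntidiag s p.2,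
        ∏ i ∈ insert a s, ((1 : MvPolynomial ι ℤ) + X i) ^ (Finsupp.update g a p.1) i
        = ((1 : MvPolynomial ι ℤ) + X a) ^ p.1 * ∏ i ∈ s, ((1 : MvPolynomial ι ℤ) + X i) ^ g i := by
      intro p _ g _
      rw [Finset.prod_insert h]
      congr 1
      · rw [Finsupp.coe_update, Function.update_self]
      · refine Finset.prod_congr rfl fun i hi => ?_
        have hia : i ≠ a := fun e => h (e ▸ hi)
        rw [Finsupp.coe_update, Function.update_of_ne hia]
    have LHS1 : ∑ p ∈ antidiagonal n, ∑ g ∈ finsuppAntidiag s p.2,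
          ∏ i ∈ insert a s, ((1 : MvPolynomial ι ℤ) + X i) ^ (Finsupp.update g a p.1) i
        = ∑ p ∈ antidiagonal n, ∑ q ∈ antidiagonal p.1, ∑ r ∈ antidiagonal p.2,
            (C ((q.1 + q.2).choose q.1 : ℤ) * C ((Nat.multichoose (c + r.1) r.2 : ℤ))) *
              (X a ^ q.1 * ∑ e ∈ finsuppAntidiag s r.1, monomial e (1 : ℤ)) := by
      refine Finset.sum_congr rfl fun p hp => ?_
      rw [Finset.sum_congr rfl (step1 p hp), ← Finset.mul_sum, ih p.2, one_add_X_pow,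
        Finset.sum_mul_sum]
      exact Finset.sum_congr rfl fun q _ => Finset.sum_congr rfl fun r _ =>
        mul_mul_mul_comm _ _ _ _
    rw [LHS1, regroup (fun j u k r =>
      (C ((j + u).choose j : ℤ) * C ((Nat.multichoose (c + k) r : ℤ))) *
        (X a ^ j * ∑ e ∈ finsuppAntidiag s k, monomial e (1 : ℤ))) n]
    -- transform RHS
    rw [eq_comm]
    refine Finset.sum_congr rfl fun p hp => ?_
    rw [H_insert h, Finset.mul_sum]
    refine Finset.sum_congr rfl fun q hq => ?_
    have hq' : q.1 + q.2 = p.1 := Finset.HasAntidiagonal.mem_antidiagonal.mp hq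
    have hmc : Nat.multichoose ((insert a s).card + p.1) p.2
        = ∑ v ∈ antidiagonal p.2, (q.1 + v.1).choose q.1 * Nat.multichoose (c + q.2) v.2 := by
      rw [hcard, ← hq']
      have harg : c + 1 + (q.1 + q.2) = (q.1 + 1) + (c + q.2) := by omega
      rw [harg, ← mc_conv (q.1 + 1) (c + q.2) p.2]
      exact Finset.sum_congr rfl fun v _ => by rw [mc_choose]
    rw [hmc]
    push_cast
    rw [map_sum, Finset.sum_mul]
    refine Finset.sum_congr rfl fun v _ => ?_
    rw [map_mul]

/-- The complete homogeneous symmetric polynomial `h_k(y_1,…,y_m)`: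
the sum of all monomials of total degree `k`. -/
noncomputable def hpoly (m k : ℕ) : MvPolynomial (Fin m) ℤ :=
  ∑ d ∈ Finset.finsuppAntidiag (Finset.univ : Finset (Fin m)) k, monomial d (1 : ℤ)

/-- `h_t(1+y_1,…,1+y_m) = Σ_{k=0}^t C(m+t−1, m+k−1) h_k(y_1,…,y_m)`. -/
theorem stmt17 {m : ℕ} (hm : 1 ≤ m) (t : ℕ) :
    MvPolynomial.aeval (fun i => 1 + MvPolynomial.X i) (hpoly m t) =
      ∑ k ∈ Finset.range (t + 1),
        MvPolynomial.C (((m + t - 1).choose (m + k - 1) : ℤ)) * hpoly m k := by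
  have hLHS : MvPolynomial.aeval (fun i => 1 + MvPolynomial.X i) (hpoly m t)
      = ∑ d ∈ Finset.finsuppAntidiag (Finset.univ : Finset (Fin m)) t,
          ∏ i ∈ Finset.univ, ((1 : MvPolynomial (Fin m) ℤ) + X i) ^ d i := by
    rw [hpoly, map_sum]
    refine Finset.sum_congr rfl fun d _ => ?_
    rw [aeval_monomial, map_one, one_mul]
    exact Finsupp.prod_fintype d _ (fun i => pow_zero _)
  rw [hLHS, ML (Finset.univ : Finset (Fin m)) t]
  rw [Finset.Nat.sum_antidiagonal_eq_sum_range_succ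
    (fun K U => C ((Nat.multichoose ((Finset.univ : Finset (Fin m)).card + K) U : ℤ)) *
      ∑ e ∈ Finset.finsuppAntidiag (Finset.univ : Finset (Fin m)) K, monomial e (1 : ℤ)) t]
  refine Finset.sum_congr rfl fun K hK => ?_
  have hKt : K ≤ t := by rw [Finset.mem_range] at hK; omega
  have hcard : (Finset.univ : Finset (Fin m)).card = m := by simp
  have hmc : Nat.multichoose (m + K) (t - K) = (m + t - 1).choose (m + K - 1) := by
    rw [Nat.multichoose_eq]
    have h1 : m + K + (t - K) - 1 = m + t - 1 := by omega
    rw [h1]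
    exact Nat.choose_symm_of_eq_add (by omega)
  rw [hcard, hmc]
  rfl
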